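/- Under instrument unconfoundedness, instrument overlap, monotonicity and instrumentation, the local average treatment effect is identified by inverse probability weighting: the denominator E[Z·D/π*] − E[(1−Z)·D/(1−π*)] equals P(D(1) > D(0)) > 0, and E[Y(1) − Y(0) | D(1) > D(0)] = ( E[Z·Y/π*(X)] − E[(1−Z)·Y/(1−π*(X))] ) / ( E[Z·D/π*(X)] − E[(1−Z)·D/(1−π*(X))] ). -/

import Mathlib

open MeasureTheory ProbabilityTheory
open scoped ENNReal NNReal

/-- Transfer lemma: if two `[0,1]`-valued densities `g, h` give the same integral on a
π-system generating a sub-σ-algebra `𝓜`, then for any `𝓜`-measurable `f` with `g*f`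
integrable, `h*f` is integrable with the same integral. -/
lemma late_transfer {Ω : Type*} [mΩ : MeasurableSpace Ω]
    (P : Measure Ω) [IsProbabilityMeasure P]
    (𝓜 : MeasurableSpace Ω) (h𝓜 : 𝓜 ≤ mΩ)
    (C : Set (Set Ω)) (hC : IsPiSystem C)
    (hgen : 𝓜 = MeasurableSpace.generateFrom C)
    (hunivC : Set.univ ∈ C)
    (g h : Ω → ℝ) (hg : Measurable[mΩ] g) (hh : Measurable[mΩ] h)
    (hg01 : ∀ᵐ ω ∂P, 0 ≤ g ω ∧ g ω ≤ 1)
    (hh01 : ∀ᵐ ω ∂P, 0 ≤ h ω ∧ h ω ≤ 1)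
    (hagree : ∀ A ∈ C, ∫ ω in A, g ω ∂P = ∫ ω in A, h ω ∂P)
    (f : Ω → ℝ) (hf : Measurable[𝓜] f)
    (hfint : Integrable (fun ω => g ω * f ω) P) :
    Integrable (fun ω => h ω * f ω) P ∧
      ∫ ω, g ω * f ω ∂P = ∫ ω, h ω * f ω ∂P := by
  have hρval : ∀ (d : Ω → ℝ), Measurable[mΩ] d → (∀ᵐ ω ∂P, 0 ≤ d ω ∧ d ω ≤ 1) →
      ∀ A : Set Ω, MeasurableSet[mΩ] A →
      P.withDensity (fun ω => ((d ω).toNNReal : ℝ≥0∞)) A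
        = ENNReal.ofReal (∫ ω in A, d ω ∂P) := by
    intro d hd hd01 A hA
    have hdint : Integrable d P := by
      refine (integrable_const (1 : ℝ)).mono' hd.aestronglyMeasurable ?_
      filter_upwards [hd01] with ω hω
      rw [Real.norm_eq_abs, abs_le]; exact ⟨by linarith [hω.1], hω.2⟩
    rw [withDensity_apply _ hA,
      ofReal_integral_eq_lintegral_ofReal hdint.restrict
        (ae_restrict_of_ae (hd01.mono fun ω hω => hω.1))]
    rfl
  set ρ₁ := P.withDensity (fun ω => ((g ω).toNNReal : ℝ≥0∞)) with hρ₁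
  set ρ₂ := P.withDensity (fun ω => ((h ω).toNNReal : ℝ≥0∞)) with hρ₂
  haveI : IsFiniteMeasure ρ₁ := ⟨by
    rw [hρ₁, hρval g hg hg01 Set.univ MeasurableSet.univ]; exact ENNReal.ofReal_lt_top⟩
  haveI : IsFiniteMeasure ρ₂ := ⟨by
    rw [hρ₂, hρval h hh hh01 Set.univ MeasurableSet.univ]; exact ENNReal.ofReal_lt_top⟩
  have htrim : ρ₁.trim h𝓜 = ρ₂.trim h𝓜 := by
    refine ext_of_generate_finite C hgen hC (fun A hA => ?_) ?_
    · have hA𝓜 : MeasurableSet[𝓜] A := by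
        rw [hgen]; exact MeasurableSpace.measurableSet_generateFrom hA
      rw [trim_measurableSet_eq h𝓜 hA𝓜, trim_measurableSet_eq h𝓜 hA𝓜,
        hρval g hg hg01 A (h𝓜 _ hA𝓜), hρval h hh hh01 A (h𝓜 _ hA𝓜), hagree A hA]
    · rw [trim_measurableSet_eq h𝓜 MeasurableSet.univ,
        trim_measurableSet_eq h𝓜 MeasurableSet.univ,
        hρval g hg hg01 _ MeasurableSet.univ, hρval h hh hh01 _ MeasurableSet.univ,
        hagree _ hunivC]
  have hfm : StronglyMeasurable[𝓜] f := hf.stronglyMeasurable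
  have hgae : (fun ω => (g ω).toNNReal • f ω) =ᵐ[P] (fun ω => g ω * f ω) := by
    filter_upwards [hg01] with ω hω
    simp [NNReal.smul_def, Real.coe_toNNReal _ hω.1]
  have hhae : (fun ω => (h ω).toNNReal • f ω) =ᵐ[P] (fun ω => h ω * f ω) := by
    filter_upwards [hh01] with ω hω
    simp [NNReal.smul_def, Real.coe_toNNReal _ hω.1]
  have hgnm : Measurable[mΩ] fun ω => (g ω).toNNReal := measurable_real_toNNReal.comp hg
  have hhnm : Measurable[mΩ] fun ω => (h ω).toNNReal := measurable_real_toNNReal.comp hh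
  have hint1 : Integrable f ρ₁ :=
    (integrable_withDensity_iff_integrable_smul hgnm).mpr (hfint.congr hgae.symm)
  have hint2 : Integrable f ρ₂ := by
    have h1 := hint1.trim h𝓜 hfm
    rw [htrim] at h1
    exact integrable_of_integrable_trim h𝓜 h1
  have hIeq : ∫ ω, f ω ∂ρ₁ = ∫ ω, f ω ∂ρ₂ :=
    (integral_trim h𝓜 hfm).trans (by rw [htrim]; exact (integral_trim h𝓜 hfm).symm)
  clear htrim hint1 hfm hf hρval hgen hC hunivC hagree h𝓜 𝓜
  refine ⟨((integrable_withDensity_iff_integrable_smul hhnm).mp hint2).congr hhae, ?_⟩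
  calc ∫ ω, g ω * f ω ∂P = ∫ ω, f ω ∂ρ₁ := by
        rw [hρ₁, integral_withDensity_eq_integral_smul (μ := P) hgnm f]
        exact (integral_congr_ae hgae).symm
    _ = ∫ ω, f ω ∂ρ₂ := hIeq
    _ = ∫ ω, h ω * f ω ∂P := by
        rw [hρ₂, integral_withDensity_eq_integral_smul (μ := P) hhnm f]
        exact integral_congr_ae hhae

theorem stmt_1
    {Ω : Type*} [mΩ : MeasurableSpace Ω] [StandardBorelSpace Ω] [Nonempty Ω]
    {𝒳 : Type*} [MeasurableSpace 𝒳] [StandardBorelSpace 𝒳]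
    (P : Measure Ω) [IsProbabilityMeasure P]
    (Z D1 D0 Y1 Y0 : Ω → ℝ) (X : Ω → 𝒳)
    (hZmeas : Measurable Z) (hD1meas : Measurable D1) (hD0meas : Measurable D0)
    (hY1meas : Measurable Y1) (hY0meas : Measurable Y0) (hXmeas : Measurable X)
    (hZbin : ∀ᵐ ω ∂P, Z ω = 0 ∨ Z ω = 1)
    (hD1bin : ∀ᵐ ω ∂P, D1 ω = 0 ∨ D1 ω = 1)
    (hD0bin : ∀ᵐ ω ∂P, D0 ω = 0 ∨ D0 ω = 1)
    (𝓖 : MeasurableSpace Ω) (h𝓖 : 𝓖 = MeasurableSpace.comap X inferInstance)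
    (h𝓖le : 𝓖 ≤ mΩ)
    (πs : Ω → ℝ) (hπs : πs = P[Z | 𝓖])
    (hunconf : CondIndepFun 𝓖 h𝓖le (fun ω => (Y1 ω, Y0 ω, D1 ω, D0 ω)) Z P)
    (hoverlap : ∀ᵐ ω ∂P, 0 < πs ω ∧ πs ω < 1)
    (hmono : ∀ᵐ ω ∂P, D0 ω ≤ D1 ω)
    (hinstr : P {ω | D1 ω = 1} ≠ P {ω | D0 ω = 1})
    (D Y : Ω → ℝ)
    (hD : D = fun ω => Z ω * D1 ω + (1 - Z ω) * D0 ω)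
    (hY : Y = fun ω => D ω * Y1 ω + (1 - D ω) * Y0 ω)
    (hint1 : Integrable (fun ω => Z ω * D ω / πs ω) P)
    (hint2 : Integrable (fun ω => (1 - Z ω) * D ω / (1 - πs ω)) P)
    (hint3 : Integrable (fun ω => Z ω * Y ω / πs ω) P)
    (hint4 : Integrable (fun ω => (1 - Z ω) * Y ω / (1 - πs ω)) P)
    (hint5 : Integrable (fun ω => Y1 ω - Y0 ω) P) :
    ((∫ ω, Z ω * D ω / πs ω ∂P) - (∫ ω, (1 - Z ω) * D ω / (1 - πs ω) ∂P)
        = (P {ω | D0 ω < D1 ω}).toReal) ∧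
    0 < (P {ω | D0 ω < D1 ω}).toReal ∧
    (∫ ω in {ω | D0 ω < D1 ω}, (Y1 ω - Y0 ω) ∂P) / (P {ω | D0 ω < D1 ω}).toReal =
      ((∫ ω, Z ω * Y ω / πs ω ∂P) - (∫ ω, (1 - Z ω) * Y ω / (1 - πs ω) ∂P)) /
        ((∫ ω, Z ω * D ω / πs ω ∂P) - (∫ ω, (1 - Z ω) * D ω / (1 - πs ω) ∂P)) := by
  classical
  set W : Ω → ℝ × ℝ × ℝ × ℝ := fun ω => (Y1 ω, Y0 ω, D1 ω, D0 ω) with hWdef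
  have hWmeas : Measurable[mΩ] W := hY1meas.prodMk (hY0meas.prodMk (hD1meas.prodMk hD0meas))
  set mW : MeasurableSpace Ω := MeasurableSpace.comap W inferInstance with hmWdef
  set 𝓜 : MeasurableSpace Ω := mW ⊔ 𝓖 with h𝓜def
  have hmWle : mW ≤ mΩ := measurable_iff_comap_le.mp hWmeas
  have h𝓜 : 𝓜 ≤ mΩ := sup_le hmWle h𝓖le
  have hWc : Measurable[mW] W := measurable_iff_comap_le.mpr le_rfl
  set C : Set (Set Ω) :=
    {A | ∃ s : Set (ℝ × ℝ × ℝ × ℝ), MeasurableSet s ∧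
      ∃ G, MeasurableSet[𝓖] G ∧ A = W ⁻¹' s ∩ G} with hCdef
  letI : MeasurableSpace Ω := mΩ
  have hunivC : Set.univ ∈ C :=
    ⟨Set.univ, MeasurableSet.univ, Set.univ, MeasurableSet.univ, by simp⟩
  have hCpi : IsPiSystem C := by
    rintro A ⟨s, hs, G, hG, rfl⟩ A' ⟨s', hs', G', hG', rfl⟩ _
    exact ⟨s ∩ s', hs.inter hs', G ∩ G', hG.inter hG',
      by rw [Set.preimage_inter]; exact Set.inter_inter_inter_comm _ _ _ _⟩
  have hgen : 𝓜 = MeasurableSpace.generateFrom C := by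
    refine le_antisymm (sup_le ?_ ?_) (MeasurableSpace.generateFrom_le ?_)
    · intro A hA
      obtain ⟨s, hs, rfl⟩ := MeasurableSpace.measurableSet_comap.mp hA
      exact MeasurableSpace.measurableSet_generateFrom
        ⟨s, hs, Set.univ, MeasurableSet.univ, (Set.inter_univ _).symm⟩
    · intro G hG
      exact MeasurableSpace.measurableSet_generateFrom
        ⟨Set.univ, MeasurableSet.univ, G, hG, (Set.univ_inter _).symm⟩
    · rintro A ⟨s, hs, G, hG, rfl⟩
      exact ((le_sup_left : mW ≤ 𝓜) _ (MeasurableSpace.measurableSet_comap.mpr ⟨s, hs, rfl⟩)).inter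
        ((le_sup_right : 𝓖 ≤ 𝓜) _ hG)
  -- basic bounds and integrability
  have hZ01 : ∀ᵐ ω ∂P, 0 ≤ Z ω ∧ Z ω ≤ 1 := by
    filter_upwards [hZbin] with ω hω; rcases hω with h | h <;> simp [h]
  have hZ01' : ∀ᵐ ω ∂P, 0 ≤ 1 - Z ω ∧ 1 - Z ω ≤ 1 := by
    filter_upwards [hZbin] with ω hω; rcases hω with h | h <;> simp [h]
  have hπ01 : ∀ᵐ ω ∂P, 0 ≤ πs ω ∧ πs ω ≤ 1 := by
    filter_upwards [hoverlap] with ω hω; exact ⟨hω.1.le, hω.2.le⟩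
  have hπ01' : ∀ᵐ ω ∂P, 0 ≤ 1 - πs ω ∧ 1 - πs ω ≤ 1 := by
    filter_upwards [hoverlap] with ω hω; constructor <;> linarith [hω.1, hω.2]
  have hZint : Integrable Z P := by
    refine (integrable_const (1 : ℝ)).mono' hZmeas.aestronglyMeasurable ?_
    filter_upwards [hZ01] with ω hω
    rw [Real.norm_eq_abs, abs_le]; exact ⟨by linarith [hω.1], hω.2⟩
  have hπsSM : StronglyMeasurable[𝓖] πs := by rw [hπs]; exact stronglyMeasurable_condExp
  have hπsmeas : Measurable[mΩ] πs := (hπsSM.mono h𝓖le).measurable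
  have hπsint : Integrable πs P := by rw [hπs]; exact integrable_condExp
  -- the key π-system identity from conditional independence
  have hZind : Z =ᵐ[P] (Z ⁻¹' ({1} : Set ℝ)).indicator (fun _ => (1 : ℝ)) := by
    filter_upwards [hZbin] with ω hω
    rcases hω with h | h <;> simp [Set.indicator_apply, Set.mem_preimage, h]
  have hπind : P[(Z ⁻¹' ({1} : Set ℝ)).indicator (fun _ => (1 : ℝ)) | 𝓖] =ᵐ[P] πs := by
    rw [hπs]; exact condExp_congr_ae hZind.symm
  have key : ∀ A ∈ C, ∫ ω in A, Z ω ∂P = ∫ ω in A, πs ω ∂P := by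
    rintro A ⟨s, hs, G, hG, rfl⟩
    have hGm : MeasurableSet[mΩ] G := h𝓖le _ hG
    have hWs : MeasurableSet[mΩ] (W ⁻¹' s) := hWmeas hs
    have hZ1 : MeasurableSet[mΩ] (Z ⁻¹' ({1} : Set ℝ)) := hZmeas (measurableSet_singleton 1)
    have hci := (condIndepFun_iff_condExp_inter_preimage_eq_mul (μ := P) hWmeas hZmeas).mp
      hunconf s {1} hs (measurableSet_singleton 1)
    have l1 : ∫ ω in W ⁻¹' s ∩ G, Z ω ∂P
        = (P (W ⁻¹' s ∩ Z ⁻¹' ({1} : Set ℝ) ∩ G)).toReal := by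
      rw [setIntegral_congr_ae (hWs.inter hGm)
        (by filter_upwards [hZind] with ω hω _; exact hω)]
      rw [setIntegral_indicator hZ1, setIntegral_const, smul_eq_mul, mul_one]
      congr 1
      rw [Set.inter_right_comm]
    have hIndInt : Integrable ((W ⁻¹' s ∩ Z ⁻¹' ({1} : Set ℝ)).indicator (fun _ => (1 : ℝ))) P :=
      (integrable_const 1).indicator (hWs.inter hZ1)
    have l2 : (P (W ⁻¹' s ∩ Z ⁻¹' ({1} : Set ℝ) ∩ G)).toReal
        = ∫ ω in G, ((W ⁻¹' s ∩ Z ⁻¹' ({1} : Set ℝ)).indicator (fun _ => (1 : ℝ))) ω ∂P := by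
      rw [setIntegral_indicator (hWs.inter hZ1), setIntegral_const, smul_eq_mul, mul_one,
        Set.inter_comm]; rfl
    have l3 : ∫ ω in G, ((W ⁻¹' s ∩ Z ⁻¹' ({1} : Set ℝ)).indicator (fun _ => (1 : ℝ))) ω ∂P
        = ∫ ω in G, (P[(W ⁻¹' s ∩ Z ⁻¹' ({1} : Set ℝ)).indicator (fun _ => (1 : ℝ)) | 𝓖]) ω ∂P :=
      (setIntegral_condExp h𝓖le hIndInt hG).symm
    have l4 : ∫ ω in G, (P[(W ⁻¹' s ∩ Z ⁻¹' ({1} : Set ℝ)).indicator (fun _ => (1 : ℝ)) | 𝓖]) ω ∂P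
        = ∫ ω in G, (πs ω * (P[(W ⁻¹' s).indicator (fun _ => (1 : ℝ)) | 𝓖]) ω) ∂P := by
      refine setIntegral_congr_ae hGm ?_
      filter_upwards [hci, hπind] with ω h1 h2 _
      rw [h1, h2, mul_comm]
    have hWindInt : Integrable ((W ⁻¹' s).indicator (fun _ => (1 : ℝ))) P :=
      (integrable_const 1).indicator hWs
    have hmul2 : P[fun ω => πs ω * ((W ⁻¹' s).indicator (fun _ => (1 : ℝ)) ω) | 𝓖]
        =ᵐ[P] fun ω => πs ω * (P[(W ⁻¹' s).indicator (fun _ => (1 : ℝ)) | 𝓖]) ω :=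
      condExp_stronglyMeasurable_mul_of_bound h𝓖le hπsSM hWindInt 1
        (by filter_upwards [hπ01] with ω hω;
            rw [Real.norm_eq_abs, abs_le]; exact ⟨by linarith [hω.1], hω.2⟩)
    have hπIndInt : Integrable (fun ω => πs ω * ((W ⁻¹' s).indicator (fun _ => (1 : ℝ)) ω)) P := by
      refine (integrable_const (1 : ℝ)).mono'
        ((hπsmeas.mul (measurable_const.indicator hWs)).aestronglyMeasurable) ?_
      filter_upwards [hπ01] with ω hω
      rw [Real.norm_eq_abs, abs_mul]
      have h1 : |πs ω| ≤ 1 := abs_le.mpr ⟨by linarith [hω.1], hω.2⟩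
      have h2 : |((W ⁻¹' s).indicator (fun _ => (1 : ℝ)) ω)| ≤ 1 := by
        by_cases hmem : ω ∈ W ⁻¹' s <;> simp [hmem]
      calc |πs ω| * |((W ⁻¹' s).indicator (fun _ => (1 : ℝ)) ω)| ≤ 1 * 1 :=
            mul_le_mul h1 h2 (abs_nonneg _) zero_le_one
        _ = 1 := mul_one 1
    have l5 : ∫ ω in G, (πs ω * (P[(W ⁻¹' s).indicator (fun _ => (1 : ℝ)) | 𝓖]) ω) ∂P
        = ∫ ω in G, πs ω * ((W ⁻¹' s).indicator (fun _ => (1 : ℝ)) ω) ∂P := by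
      rw [← setIntegral_condExp h𝓖le hπIndInt hG]
      exact setIntegral_congr_ae hGm
        (by filter_upwards [hmul2] with ω hω _; exact hω.symm)
    have l6 : ∫ ω in G, πs ω * ((W ⁻¹' s).indicator (fun _ => (1 : ℝ)) ω) ∂P
        = ∫ ω in W ⁻¹' s ∩ G, πs ω ∂P := by
      have hpt : ∀ ω, πs ω * ((W ⁻¹' s).indicator (fun _ => (1 : ℝ)) ω)
          = (W ⁻¹' s).indicator πs ω := by
        intro ω; by_cases hmem : ω ∈ W ⁻¹' s <;> simp [hmem]
      simp_rw [hpt]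
      rw [setIntegral_indicator hWs, Set.inter_comm]
    rw [l1, l2, l3, l4, l5, l6]
  have key' : ∀ A ∈ C, ∫ ω in A, (1 - Z ω) ∂P = ∫ ω in A, (1 - πs ω) ∂P := by
    intro A hA
    rw [integral_sub (integrable_const 1).restrict hZint.restrict,
      integral_sub (integrable_const 1).restrict hπsint.restrict, key A hA]
  -- measurability with respect to 𝓜
  have hY1W : Measurable[mW] Y1 := measurable_fst.comp hWc
  have hY0W : Measurable[mW] Y0 := (measurable_fst.comp measurable_snd).comp hWc
  have hD1W : Measurable[mW] D1 :=
    (measurable_fst.comp (measurable_snd.comp measurable_snd)).comp hWc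
  have hD0W : Measurable[mW] D0 :=
    (measurable_snd.comp (measurable_snd.comp measurable_snd)).comp hWc
  have h𝓜Y1 : Measurable[𝓜] Y1 := hY1W.mono le_sup_left le_rfl
  have h𝓜Y0 : Measurable[𝓜] Y0 := hY0W.mono le_sup_left le_rfl
  have h𝓜D1 : Measurable[𝓜] D1 := hD1W.mono le_sup_left le_rfl
  have h𝓜D0 : Measurable[𝓜] D0 := hD0W.mono le_sup_left le_rfl
  have h𝓜πs : Measurable[𝓜] πs := (hπsSM.measurable).mono le_sup_right le_rfl
  set W1 : Ω → ℝ := fun ω => D1 ω * Y1 ω + (1 - D1 ω) * Y0 ω with hW1def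
  set W0 : Ω → ℝ := fun ω => D0 ω * Y1 ω + (1 - D0 ω) * Y0 ω with hW0def
  have h𝓜W1 : Measurable[𝓜] W1 :=
    (h𝓜D1.mul h𝓜Y1).add ((measurable_const.sub h𝓜D1).mul h𝓜Y0)
  have h𝓜W0 : Measurable[𝓜] W0 :=
    (h𝓜D0.mul h𝓜Y1).add ((measurable_const.sub h𝓜D0).mul h𝓜Y0)
  have h𝓜f1 : Measurable[𝓜] (fun ω => W1 ω / πs ω) := h𝓜W1.div h𝓜πs
  have h𝓜f0 : Measurable[𝓜] (fun ω => W0 ω / (1 - πs ω)) :=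
    h𝓜W0.div (measurable_const.sub h𝓜πs)
  have h𝓜g1 : Measurable[𝓜] (fun ω => D1 ω / πs ω) := h𝓜D1.div h𝓜πs
  have h𝓜g0 : Measurable[𝓜] (fun ω => D0 ω / (1 - πs ω)) :=
    h𝓜D0.div (measurable_const.sub h𝓜πs)
  -- pointwise identifications
  have hZeqW1 : (fun ω => Z ω * (W1 ω / πs ω)) =ᵐ[P] fun ω => Z ω * Y ω / πs ω := by
    filter_upwards [hZbin] with ω hω
    rcases hω with h | h
    · simp [h]
    · simp only [hY, hD, hW1def, h]; ring
  have hZeqW0 : (fun ω => (1 - Z ω) * (W0 ω / (1 - πs ω)))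
      =ᵐ[P] fun ω => (1 - Z ω) * Y ω / (1 - πs ω) := by
    filter_upwards [hZbin] with ω hω
    rcases hω with h | h
    · simp only [hY, hD, hW0def, h]; ring
    · simp [h]
  have hZeqD1 : (fun ω => Z ω * (D1 ω / πs ω)) =ᵐ[P] fun ω => Z ω * D ω / πs ω := by
    filter_upwards [hZbin] with ω hω
    rcases hω with h | h
    · simp [h]
    · simp only [hD, h]; ring
  have hZeqD0 : (fun ω => (1 - Z ω) * (D0 ω / (1 - πs ω)))
      =ᵐ[P] fun ω => (1 - Z ω) * D ω / (1 - πs ω) := by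
    filter_upwards [hZbin] with ω hω
    rcases hω with h | h
    · simp only [hD, h]; ring
    · simp [h]
  -- apply the transfer lemma four times
  have hZmeas' : Measurable[mΩ] fun ω => 1 - Z ω := measurable_const.sub hZmeas
  have hπsmeas' : Measurable[mΩ] fun ω => 1 - πs ω := measurable_const.sub hπsmeas
  obtain ⟨hiW1, heW1⟩ := late_transfer P 𝓜 h𝓜 C hCpi hgen hunivC Z πs hZmeas hπsmeas
    hZ01 hπ01 key _ h𝓜f1 (hint3.congr hZeqW1.symm)
  obtain ⟨hiW0, heW0⟩ := late_transfer P 𝓜 h𝓜 C hCpi hgen hunivC _ _ hZmeas' hπsmeas'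
    hZ01' hπ01' key' _ h𝓜f0 (hint4.congr hZeqW0.symm)
  obtain ⟨hiD1, heD1⟩ := late_transfer P 𝓜 h𝓜 C hCpi hgen hunivC Z πs hZmeas hπsmeas
    hZ01 hπ01 key _ h𝓜g1 (hint1.congr hZeqD1.symm)
  obtain ⟨hiD0, heD0⟩ := late_transfer P 𝓜 h𝓜 C hCpi hgen hunivC _ _ hZmeas' hπsmeas'
    hZ01' hπ01' key' _ h𝓜g0 (hint2.congr hZeqD0.symm)
  -- cancel the densities
  have hcancW1 : (fun ω => πs ω * (W1 ω / πs ω)) =ᵐ[P] W1 := by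
    filter_upwards [hoverlap] with ω hω
    rw [mul_comm, div_mul_cancel₀ _ (ne_of_gt hω.1)]
  have hcancW0 : (fun ω => (1 - πs ω) * (W0 ω / (1 - πs ω))) =ᵐ[P] W0 := by
    filter_upwards [hoverlap] with ω hω
    rw [mul_comm, div_mul_cancel₀ _ (by linarith [hω.2] : (1 : ℝ) - πs ω ≠ 0)]
  have hcancD1 : (fun ω => πs ω * (D1 ω / πs ω)) =ᵐ[P] D1 := by
    filter_upwards [hoverlap] with ω hω
    rw [mul_comm, div_mul_cancel₀ _ (ne_of_gt hω.1)]
  have hcancD0 : (fun ω => (1 - πs ω) * (D0 ω / (1 - πs ω))) =ᵐ[P] D0 := by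
    filter_upwards [hoverlap] with ω hω
    rw [mul_comm, div_mul_cancel₀ _ (by linarith [hω.2] : (1 : ℝ) - πs ω ≠ 0)]
  have hW1int : Integrable W1 P := hiW1.congr hcancW1
  have hW0int : Integrable W0 P := hiW0.congr hcancW0
  have hD1int : Integrable D1 P := hiD1.congr hcancD1
  have hD0int : Integrable D0 P := hiD0.congr hcancD0
  have hW1val : ∫ ω, Z ω * Y ω / πs ω ∂P = ∫ ω, W1 ω ∂P := by
    rw [← integral_congr_ae hZeqW1, heW1]; exact integral_congr_ae hcancW1
  have hW0val : ∫ ω, (1 - Z ω) * Y ω / (1 - πs ω) ∂P = ∫ ω, W0 ω ∂P := by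
    rw [← integral_congr_ae hZeqW0, heW0]; exact integral_congr_ae hcancW0
  have hD1val : ∫ ω, Z ω * D ω / πs ω ∂P = ∫ ω, D1 ω ∂P := by
    rw [← integral_congr_ae hZeqD1, heD1]; exact integral_congr_ae hcancD1
  have hD0val : ∫ ω, (1 - Z ω) * D ω / (1 - πs ω) ∂P = ∫ ω, D0 ω ∂P := by
    rw [← integral_congr_ae hZeqD0, heD0]; exact integral_congr_ae hcancD0
  have hIndOne : ∀ (s : Set Ω), MeasurableSet[mΩ] s →
      ∫ ω, s.indicator (fun _ => (1 : ℝ)) ω ∂P = (P s).toReal := by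
    intro s hs
    rw [integral_indicator hs, setIntegral_const, smul_eq_mul, mul_one]; rfl
  -- the complier set
  have hSmeas : MeasurableSet[mΩ] {ω | D0 ω < D1 ω} := measurableSet_lt hD0meas hD1meas
  have hDdiff : (fun ω => D1 ω - D0 ω)
      =ᵐ[P] ({ω | D0 ω < D1 ω}).indicator (fun _ => (1 : ℝ)) := by
    filter_upwards [hD1bin, hD0bin, hmono] with ω h1 h0 hm
    rcases h1 with h1 | h1 <;> rcases h0 with h0 | h0 <;>
      simp [Set.indicator_apply, Set.mem_setOf_eq, h1, h0] <;> linarith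
  have hDen : (∫ ω, Z ω * D ω / πs ω ∂P) - (∫ ω, (1 - Z ω) * D ω / (1 - πs ω) ∂P)
      = (P {ω | D0 ω < D1 ω}).toReal := by
    rw [hD1val, hD0val, ← integral_sub hD1int hD0int, integral_congr_ae hDdiff,
      hIndOne _ hSmeas]
  -- positivity
  have hind1 : D1 =ᵐ[P] ({ω | D1 ω = 1} : Set Ω).indicator (fun _ => (1 : ℝ)) := by
    filter_upwards [hD1bin] with ω hω
    rcases hω with h | h <;> simp [Set.indicator_apply, Set.mem_setOf_eq, h]
  have hind0 : D0 =ᵐ[P] ({ω | D0 ω = 1} : Set Ω).indicator (fun _ => (1 : ℝ)) := by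
    filter_upwards [hD0bin] with ω hω
    rcases hω with h | h <;> simp [Set.indicator_apply, Set.mem_setOf_eq, h]
  have hset1 : MeasurableSet[mΩ] {ω | D1 ω = 1} := hD1meas (measurableSet_singleton 1)
  have hset0 : MeasurableSet[mΩ] {ω | D0 ω = 1} := hD0meas (measurableSet_singleton 1)
  have hPD1 : ∫ ω, D1 ω ∂P = (P {ω | D1 ω = 1}).toReal := by
    rw [integral_congr_ae hind1, hIndOne _ hset1]
  have hPD0 : ∫ ω, D0 ω ∂P = (P {ω | D0 ω = 1}).toReal := by
    rw [integral_congr_ae hind0, hIndOne _ hset0]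
  have hpos : 0 < (P {ω | D0 ω < D1 ω}).toReal := by
    rcases (ENNReal.toReal_nonneg (a := P {ω | D0 ω < D1 ω})).lt_or_eq with h | h
    · exact h
    · exfalso
      apply hinstr
      have hdiff0 : ∫ ω, D1 ω ∂P - ∫ ω, D0 ω ∂P = 0 := by
        rw [← integral_sub hD1int hD0int, integral_congr_ae hDdiff,
          hIndOne _ hSmeas, ← h]
      rw [hPD1, hPD0] at hdiff0
      have : (P {ω | D1 ω = 1}).toReal = (P {ω | D0 ω = 1}).toReal := by linarith
      exact (ENNReal.toReal_eq_toReal_iff' (measure_ne_top P _) (measure_ne_top P _)).mp this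
  -- numerator
  have hNumdiff : (fun ω => W1 ω - W0 ω)
      =ᵐ[P] ({ω | D0 ω < D1 ω}).indicator (fun ω => Y1 ω - Y0 ω) := by
    filter_upwards [hD1bin, hD0bin, hmono] with ω h1 h0 hm
    have hfac : W1 ω - W0 ω = (D1 ω - D0 ω) * (Y1 ω - Y0 ω) := by
      simp only [hW1def, hW0def]; ring
    rcases h1 with h1 | h1 <;> rcases h0 with h0 | h0 <;>
      simp [Set.indicator_apply, Set.mem_setOf_eq, h1, h0, hfac] <;> linarith
  have hNum : (∫ ω, Z ω * Y ω / πs ω ∂P) - (∫ ω, (1 - Z ω) * Y ω / (1 - πs ω) ∂P)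
      = ∫ ω in {ω | D0 ω < D1 ω}, (Y1 ω - Y0 ω) ∂P := by
    rw [hW1val, hW0val, ← integral_sub hW1int hW0int, integral_congr_ae hNumdiff,
      integral_indicator hSmeas]
  exact ⟨hDen, hpos, by rw [hDen, hNum]⟩
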